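/- A maximal monotone multifunction T : X →→ X* is regular if D_{T^ε} = D_T for all ε > 0. (Key step: if (z, z*) is monotonically related to T + ∂g_{λ,x}, then z* ∈ T^λ(z), hence z ∈ D_{T^λ} = D_T.) -/

import Mathlib

set_option linter.unusedSectionVars false
set_option maxHeartbeats 4000000


open scoped ENNReal
open NormedSpace Pointwise

variable {X : Type*} [NormedAddCommGroup X] [NormedSpace ℝ X] [CompleteSpace X]

/-- `T` is a monotone multifunction. -/
def IsMonotoneOp (T : X → Set (StrongDual ℝ X)) : Prop :=
  ∀ ⦃x xs y ys⦄, xs ∈ T x → ys ∈ T y → 0 ≤ (xs - ys) (x - y)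

/-- `T` is a maximal monotone multifunction. -/
def IsMaxMonotoneOp (T : X → Set (StrongDual ℝ X)) : Prop :=
  IsMonotoneOp T ∧ ∀ x xs, (∀ y ys, ys ∈ T y → 0 ≤ (xs - ys) (x - y)) → xs ∈ T x

/-- L(x, x*, T). -/
noncomputable def Lnum (T : X → Set (StrongDual ℝ X)) (x : X) (xs : StrongDual ℝ X) : ℝ≥0∞ :=
  ⨆ (y : X) (ys : StrongDual ℝ X) (_ : ys ∈ T y) (_ : y ≠ x),
    ENNReal.ofReal ((xs - ys) (y - x) / ‖x - y‖)

/-- d(x*, T(x)). -/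
noncomputable def dnum (T : X → Set (StrongDual ℝ X)) (x : X) (xs : StrongDual ℝ X) : ℝ≥0∞ :=
  ⨅ (ys : StrongDual ℝ X) (_ : ys ∈ T x), ENNReal.ofReal ‖ys - xs‖

def IsRegularOp (T : X → Set (StrongDual ℝ X)) : Prop :=
  ∀ x xs, Lnum T x xs = dnum T x xs

def subdiff (f : X → ℝ) (z : X) : Set (StrongDual ℝ X) :=
  {zs | ∀ w, f z + zs (w - z) ≤ f w}

/-- T^ε enlargement. -/
def Te (T : X → Set (StrongDual ℝ X)) (ε : ℝ) (x : X) : Set (StrongDual ℝ X) :=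
  {xs | ∀ y ys, ys ∈ T y → -(ε * ‖x - y‖) ≤ (xs - ys) (x - y)}

/-- T_ε enlargement. -/
def Tlow (T : X → Set (StrongDual ℝ X)) (ε : ℝ) (x : X) : Set (StrongDual ℝ X) :=
  {xs | ∀ y ys, ys ∈ T y → -ε ≤ (xs - ys) (x - y)}


lemma dual_lb (f : StrongDual ℝ X) (v : X) : -(‖f‖ * ‖v‖) ≤ f v := by
  have h := f.le_opNorm v
  rw [Real.norm_eq_abs] at h
  have := (abs_le.1 h).1
  linarith

lemma dual_ub (f : StrongDual ℝ X) (v : X) : f v ≤ ‖f‖ * ‖v‖ := by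
  have h := f.le_opNorm v
  rw [Real.norm_eq_abs] at h
  exact (abs_le.1 h).2

lemma lemC (T : X → Set (StrongDual ℝ X))
    (hdom : ∀ ε : ℝ, 0 < ε → {x : X | (Te T ε x).Nonempty} = {x : X | (T x).Nonempty})
    (p : X) (v : StrongDual ℝ X) (δ c : ℝ) (hδ : 0 ≤ δ) (hc : 0 ≤ c)
    (hcert : ∀ y0 ys0, ys0 ∈ T y0 → -(δ * ‖p - y0‖) - c ≤ (v - ys0) (p - y0))
    (κ ρ : ℝ) (hκ : 0 < κ) (hρ : 0 < ρ) :
    ∃ u us, us ∈ T u ∧ ‖u - p‖ ≤ ρ ∧ us (u - p) ≤ κ := by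
  by_contra hcon
  push_neg at hcon
  obtain ⟨ε, hε0, hεv, hεδ⟩ : ∃ ε : ℝ, 0 < ε ∧ ‖v‖ ≤ ε ∧ δ + c / ρ ≤ ε := by
    refine ⟨max ‖v‖ (δ + c / ρ) + 1, ?_, ?_, ?_⟩
    · have h1 : (0:ℝ) ≤ ‖v‖ := norm_nonneg v
      have h2 : ‖v‖ ≤ max ‖v‖ (δ + c / ρ) := le_max_left _ _
      linarith
    · have h2 : ‖v‖ ≤ max ‖v‖ (δ + c / ρ) := le_max_left _ _
      linarith
    · have h2 : δ + c / ρ ≤ max ‖v‖ (δ + c / ρ) := le_max_right _ _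
      linarith
  have hmem : v ∈ Te T ε p := by
    intro y0 ys0 h0
    rcases le_or_gt ‖p - y0‖ ρ with hle | hlt
    · have h1 : κ < ys0 (y0 - p) := hcon y0 ys0 h0 (by rwa [norm_sub_rev])
      have h2 : -(‖v‖ * ‖p - y0‖) ≤ v (p - y0) := dual_lb v _
      have h3 : (v - ys0) (p - y0) = v (p - y0) + ys0 (y0 - p) := by
        simp only [ContinuousLinearMap.sub_apply, map_sub]
        ring
      have h4 : ‖v‖ * ‖p - y0‖ ≤ ε * ‖p - y0‖ :=
        mul_le_mul_of_nonneg_right hεv (norm_nonneg _)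
      rw [h3]; linarith
    · have h1 := hcert y0 ys0 h0
      have hcr : (0:ℝ) ≤ c / ρ := div_nonneg hc hρ.le
      have h2 : (c / ρ) * ρ ≤ (c / ρ) * ‖p - y0‖ := mul_le_mul_of_nonneg_left hlt.le hcr
      have h2' : (c / ρ) * ρ = c := div_mul_cancel₀ c (ne_of_gt hρ)
      have h3 : (δ + c / ρ) * ‖p - y0‖ ≤ ε * ‖p - y0‖ :=
        mul_le_mul_of_nonneg_right hεδ (norm_nonneg _)
      rw [add_mul] at h3
      linarith
  have hp : p ∈ {x : X | (T x).Nonempty} := by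
    rw [← hdom ε hε0]; exact ⟨v, hmem⟩
  obtain ⟨us, hus⟩ := hp
  have hfin := hcon p us hus (by simp [hρ.le])
  simp only [sub_self, map_zero] at hfin
  linarith
lemma star (T : X → Set (StrongDual ℝ X)) (hT : IsMaxMonotoneOp T)
    (hdom : ∀ ε : ℝ, 0 < ε → {x : X | (Te T ε x).Nonempty} = {x : X | (T x).Nonempty})
    (z : X) (zs : StrongDual ℝ X) (r μ : ℝ) (hr : 0 ≤ r) (hμ : r < μ)
    (hzs : zs ∈ Te T r z)
    (n : ℕ) (y : Fin n → X) (ys : Fin n → StrongDual ℝ X) (t : Fin n → ℝ)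
    (hmem : ∀ i, ys i ∈ T (y i)) (ht : ∀ i, 0 ≤ t i) (hsum : ∑ i, t i = 1) :
    -(μ * ‖z - ∑ i, t i • y i‖) ≤ ∑ i, t i * ((zs - ys i) (z - y i)) := by
  classical
  set yb : X := ∑ i, t i • y i with hybdef
  set ws : StrongDual ℝ X := ∑ i, t i • ys i with hwsdef
  set Q : ℝ := ∑ i, t i * (ys i (y i)) with hQdef
  set G : ℝ := ∑ i, t i * ((zs - ys i) (z - y i)) with hGdef
  -- generic: applying a dual element to yb
  have happ : ∀ f : StrongDual ℝ X, f yb = ∑ i, t i * f (y i) := by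
    intro f
    rw [hybdef, map_sum]
    simp [map_smul, smul_eq_mul]
  -- applying ws to a vector
  have hws : ∀ v : X, ws v = ∑ i, t i * ys i v := by
    intro v
    rw [hwsdef]
    simp [ContinuousLinearMap.sum_apply, ContinuousLinearMap.smul_apply, smul_eq_mul]
  have hconst : ∀ b : ℝ, (∑ _i : Fin n, b * (t _i)) = b := by
    intro b
    rw [← Finset.mul_sum, hsum, mul_one]
  -- I1 : G = zs z - zs yb - ws z + Q
  have hGid : G = zs z - zs yb - ws z + Q := by
    have e1 : ∀ i : Fin n, t i * ((zs - ys i) (z - y i))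
        = zs z * t i - zs (y i) * t i - ys i z * t i + t i * (ys i (y i)) := by
      intro i
      simp only [ContinuousLinearMap.sub_apply, map_sub]
      ring
    rw [hGdef, Finset.sum_congr rfl fun i _ => e1 i]
    rw [Finset.sum_add_distrib, Finset.sum_sub_distrib, Finset.sum_sub_distrib]
    rw [hconst (zs z), ← hQdef]
    have e2 : (∑ i : Fin n, zs (y i) * t i) = zs yb := by
      rw [happ zs]
      exact Finset.sum_congr rfl fun i _ => mul_comm _ _
    have e3 : (∑ i : Fin n, ys i z * t i) = ws z := by
      rw [hws z]
      exact Finset.sum_congr rfl fun i _ => mul_comm _ _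
    rw [e2, e3]
  -- I3' : Tlow-property of ws at yb
  have hI3 : ∀ y0 ys0, ys0 ∈ T y0 → 0 ≤ (ws yb - ws y0 - ys0 yb + ys0 y0) + (Q - ws yb) := by
    intro y0 ys0 h0
    have h1 : (0:ℝ) ≤ ∑ i, t i * ((ys i - ys0) (y i - y0)) :=
      Finset.sum_nonneg fun i _ => mul_nonneg (ht i) (hT.1 (hmem i) h0)
    have e1 : ∀ i : Fin n, t i * ((ys i - ys0) (y i - y0))
        = t i * (ys i (y i)) - ys i y0 * t i - ys0 (y i) * t i + ys0 y0 * t i := by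
      intro i
      simp only [ContinuousLinearMap.sub_apply, map_sub]
      ring
    rw [Finset.sum_congr rfl fun i _ => e1 i] at h1
    rw [Finset.sum_add_distrib, Finset.sum_sub_distrib, Finset.sum_sub_distrib] at h1
    rw [hconst (ys0 y0), ← hQdef] at h1
    have e2 : (∑ i : Fin n, ys i y0 * t i) = ws y0 := by
      rw [hws y0]
      exact Finset.sum_congr rfl fun i _ => mul_comm _ _
    have e3 : (∑ i : Fin n, ys0 (y i) * t i) = ys0 yb := by
      rw [happ ys0]
      exact Finset.sum_congr rfl fun i _ => mul_comm _ _
    rw [e2, e3] at h1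
    linarith
  -- I2 : 0 ≤ C
  have hC0 : 0 ≤ Q - ws yb := by
    have h1 : (0:ℝ) ≤ ∑ j, t j * ((ws yb - ws (y j) - ys j yb + ys j (y j)) + (Q - ws yb)) :=
      Finset.sum_nonneg fun j _ => mul_nonneg (ht j) (hI3 (y j) (ys j) (hmem j))
    have e1 : ∀ j : Fin n, t j * ((ws yb - ws (y j) - ys j yb + ys j (y j)) + (Q - ws yb))
        = Q * t j - ws (y j) * t j - ys j yb * t j + t j * (ys j (y j)) := by
      intro j
      ring
    rw [Finset.sum_congr rfl fun j _ => e1 j] at h1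
    rw [Finset.sum_add_distrib, Finset.sum_sub_distrib, Finset.sum_sub_distrib] at h1
    rw [hconst Q, ← hQdef] at h1
    have e2 : (∑ j : Fin n, ws (y j) * t j) = ws yb := by
      rw [happ ws]
      exact Finset.sum_congr rfl fun j _ => mul_comm _ _
    have e3 : (∑ j : Fin n, ys j yb * t j) = ws yb := by
      rw [hws yb]
      exact Finset.sum_congr rfl fun j _ => mul_comm _ _
    rw [e2, e3] at h1
    linarith
  -- main case analysis
  by_cases hzy : yb = z
  · have hnrm : ‖z - yb‖ = 0 := by rw [hzy, sub_self, norm_zero]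
    rw [hzy] at hGid hC0
    rw [hnrm, mul_zero, neg_zero]
    linarith
  · have hD : 0 < ‖z - yb‖ := by
      rw [norm_pos_iff, sub_ne_zero]
      exact fun h => hzy (h.symm)
    have hβ : 0 < (μ - r) * ‖z - yb‖ := mul_pos (by linarith) hD
    obtain ⟨s, hs0, hs2, hsC⟩ : ∃ s : ℝ, 0 < s ∧ s ≤ 1/2 ∧
        s * (Q - ws yb) ≤ (μ - r) * ‖z - yb‖ / 8 := by
      refine ⟨min (1/2) ((μ - r) * ‖z - yb‖ / (8 * (Q - ws yb + 1))), ?_, min_le_left _ _, ?_⟩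
      · refine lt_min (by norm_num) (div_pos hβ (by linarith))
      · have h1 : min (1/2) ((μ - r) * ‖z - yb‖ / (8 * (Q - ws yb + 1)))
            ≤ (μ - r) * ‖z - yb‖ / (8 * (Q - ws yb + 1)) := min_le_right _ _
        have h2 : (0:ℝ) ≤ min (1/2) ((μ - r) * ‖z - yb‖ / (8 * (Q - ws yb + 1))) :=
          le_min (by norm_num) (le_of_lt (div_pos hβ (by linarith)))
        have h3 : min (1/2) ((μ - r) * ‖z - yb‖ / (8 * (Q - ws yb + 1))) * (Q - ws yb)
            ≤ min (1/2) ((μ - r) * ‖z - yb‖ / (8 * (Q - ws yb + 1))) * (Q - ws yb + 1) :=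
          mul_le_mul_of_nonneg_left (by linarith) h2
        have h4 : min (1/2) ((μ - r) * ‖z - yb‖ / (8 * (Q - ws yb + 1))) * (Q - ws yb + 1)
            ≤ (μ - r) * ‖z - yb‖ / (8 * (Q - ws yb + 1)) * (Q - ws yb + 1) :=
          mul_le_mul_of_nonneg_right h1 (by linarith)
        have h5 : (μ - r) * ‖z - yb‖ / (8 * (Q - ws yb + 1)) * (Q - ws yb + 1)
            = (μ - r) * ‖z - yb‖ / 8 := by
          have hne : (Q - ws yb + 1) ≠ 0 := by linarith
          field_simp
        linarith
    obtain ⟨κ, ρ, hκ0, hρ0, hκle, hρ1, hρ2⟩ : ∃ κ ρ : ℝ, 0 < κ ∧ 0 < ρ ∧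
        κ ≤ s * ((μ - r) * ‖z - yb‖) / 16 ∧
        ‖ws‖ * ρ ≤ s * ((μ - r) * ‖z - yb‖) / 16 ∧
        (‖zs‖ + r) * ρ ≤ s * ((μ - r) * ‖z - yb‖) / 16 := by
      have hMpos : (0:ℝ) < ‖zs‖ + r + ‖ws‖ + 1 := by
        have := norm_nonneg zs; have := norm_nonneg ws; linarith
      refine ⟨s * ((μ - r) * ‖z - yb‖) / 16,
        s * ((μ - r) * ‖z - yb‖) / (16 * (‖zs‖ + r + ‖ws‖ + 1)), ?_, ?_, le_rfl, ?_, ?_⟩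
      · exact div_pos (mul_pos hs0 hβ) (by norm_num)
      · exact div_pos (mul_pos hs0 hβ) (by linarith)
      · have h1 : ‖ws‖ * (s * ((μ - r) * ‖z - yb‖) / (16 * (‖zs‖ + r + ‖ws‖ + 1)))
            ≤ (‖zs‖ + r + ‖ws‖ + 1) * (s * ((μ - r) * ‖z - yb‖) / (16 * (‖zs‖ + r + ‖ws‖ + 1))) := by
          apply mul_le_mul_of_nonneg_right _ (le_of_lt (div_pos (mul_pos hs0 hβ) (by linarith)))
          have := norm_nonneg zs; linarith
        have h2 : (‖zs‖ + r + ‖ws‖ + 1) * (s * ((μ - r) * ‖z - yb‖) / (16 * (‖zs‖ + r + ‖ws‖ + 1)))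
            = s * ((μ - r) * ‖z - yb‖) / 16 := by
          field_simp
        linarith
      · have h1 : (‖zs‖ + r) * (s * ((μ - r) * ‖z - yb‖) / (16 * (‖zs‖ + r + ‖ws‖ + 1)))
            ≤ (‖zs‖ + r + ‖ws‖ + 1) * (s * ((μ - r) * ‖z - yb‖) / (16 * (‖zs‖ + r + ‖ws‖ + 1))) := by
          apply mul_le_mul_of_nonneg_right _ (le_of_lt (div_pos (mul_pos hs0 hβ) (by linarith)))
          have := norm_nonneg ws; linarith
        have h2 : (‖zs‖ + r + ‖ws‖ + 1) * (s * ((μ - r) * ‖z - yb‖) / (16 * (‖zs‖ + r + ‖ws‖ + 1)))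
            = s * ((μ - r) * ‖z - yb‖) / 16 := by
          field_simp
        linarith
    -- certificate at the segment point
    have hcert : ∀ y0 ys0, ys0 ∈ T y0 →
        -(((1-s)*r) * ‖(z + s•(yb - z)) - y0‖) -
          ((1-s)*r*(s*‖z - yb‖) + s*(Q - ws yb) + s*(1-s)*(max 0 (-((zs - ws) (yb - z)))))
          ≤ ((zs + s•(ws - zs)) - ys0) ((z + s•(yb - z)) - y0) := by
      intro y0 ys0 h0
      have h1 : -(r * ‖z - y0‖) ≤ (zs - ys0) (z - y0) := hzs y0 ys0 h0
      have h2 := hI3 y0 ys0 h0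
      have h3 : ‖z - y0‖ ≤ ‖(z + s•(yb - z)) - y0‖ + s*‖z - yb‖ := by
        have hv : z - y0 = ((z + s•(yb - z)) - y0) - s•(yb - z) := by abel
        calc ‖z - y0‖ = ‖((z + s•(yb - z)) - y0) - s•(yb - z)‖ := by rw [← hv]
          _ ≤ ‖(z + s•(yb - z)) - y0‖ + ‖s•(yb - z)‖ := norm_sub_le _ _
          _ = ‖(z + s•(yb - z)) - y0‖ + s*‖z - yb‖ := by
              rw [norm_smul, Real.norm_eq_abs, abs_of_pos hs0, norm_sub_rev yb z]
      have hid : ((zs + s•(ws - zs)) - ys0) ((z + s•(yb - z)) - y0)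
          = (1-s)*((zs - ys0) (z - y0)) + s*(ws yb - ws y0 - ys0 yb + ys0 y0)
            + s*(1-s)*((zs - ws) (yb - z)) := by
        simp only [ContinuousLinearMap.sub_apply, ContinuousLinearMap.add_apply,
          ContinuousLinearMap.smul_apply, map_add, map_smul, map_sub, smul_eq_mul]
        ring
      have h4 : -(max 0 (-((zs - ws) (yb - z)))) ≤ (zs - ws) (yb - z) := by
        have := le_max_right (0:ℝ) (-((zs - ws) (yb - z))); linarith
      rw [hid]
      have e1 : (1-s)*(-(r * ‖z - y0‖)) ≤ (1-s)*((zs - ys0) (z - y0)) :=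
        mul_le_mul_of_nonneg_left h1 (by linarith)
      have e2 : s*(-(Q - ws yb)) ≤ s*(ws yb - ws y0 - ys0 yb + ys0 y0) :=
        mul_le_mul_of_nonneg_left (by linarith) hs0.le
      have e3 : (s*(1-s))*(-(max 0 (-((zs - ws) (yb - z))))) ≤ (s*(1-s))*((zs - ws) (yb - z)) :=
        mul_le_mul_of_nonneg_left h4 (mul_nonneg hs0.le (by linarith))
      have e4 : ((1-s)*r)*‖z - y0‖ ≤ ((1-s)*r)*(‖(z + s•(yb - z)) - y0‖ + s*‖z - yb‖) :=
        mul_le_mul_of_nonneg_left h3 (mul_nonneg (by linarith) hr)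
      nlinarith [e1, e2, e3, e4]
    have hcnn : (0:ℝ) ≤ (1-s)*r*(s*‖z - yb‖) + s*(Q - ws yb)
        + s*(1-s)*(max 0 (-((zs - ws) (yb - z)))) := by
      have p1 : (0:ℝ) ≤ (1-s)*r*(s*‖z - yb‖) :=
        mul_nonneg (mul_nonneg (by linarith) hr) (mul_nonneg hs0.le (norm_nonneg _))
      have p2 : (0:ℝ) ≤ s*(Q - ws yb) := mul_nonneg hs0.le hC0
      have p3 : (0:ℝ) ≤ s*(1-s)*(max 0 (-((zs - ws) (yb - z)))) :=
        mul_nonneg (mul_nonneg hs0.le (by linarith)) (le_max_left _ _)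
      linarith
    obtain ⟨u, us, hus, hu1, hu2⟩ :=
      lemC T hdom (z + s•(yb - z)) (zs + s•(ws - zs)) ((1-s)*r)
        ((1-s)*r*(s*‖z - yb‖) + s*(Q - ws yb) + s*(1-s)*(max 0 (-((zs - ws) (yb - z)))))
        (mul_nonneg (by linarith) hr) hcnn hcert κ ρ hκ0 hρ0
    -- error bounds
    have hEzs_lb : -(‖zs‖*ρ) ≤ zs (u - (z + s•(yb - z))) := by
      have h1 := dual_lb zs (u - (z + s•(yb - z)))
      have h2 : ‖zs‖*‖u - (z + s•(yb - z))‖ ≤ ‖zs‖*ρ :=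
        mul_le_mul_of_nonneg_left hu1 (norm_nonneg zs)
      linarith
    have hEws_lb : -(‖ws‖*ρ) ≤ ws (u - (z + s•(yb - z))) := by
      have h1 := dual_lb ws (u - (z + s•(yb - z)))
      have h2 : ‖ws‖*‖u - (z + s•(yb - z))‖ ≤ ‖ws‖*ρ :=
        mul_le_mul_of_nonneg_left hu1 (norm_nonneg ws)
      linarith
    -- expansions
    have hexp_zs : zs u = zs z + s*(zs yb) - s*(zs z) + zs (u - (z + s•(yb - z))) := by
      simp only [map_sub, map_add, map_smul, smul_eq_mul]
      ring
    have hexp_us : us u = us z + s*(us yb) - s*(us z) + us (u - (z + s•(yb - z))) := by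
      simp only [map_sub, map_add, map_smul, smul_eq_mul]
      ring
    have hexp_ws : ws u = ws z + s*(ws yb) - s*(ws z) + ws (u - (z + s•(yb - z))) := by
      simp only [map_sub, map_add, map_smul, smul_eq_mul]
      ring
    -- distance estimate
    have hvec : z - u = s•(z - yb) - (u - (z + s•(yb - z))) := by
      rw [smul_sub, smul_sub]
      abel
    have hzu : ‖z - u‖ ≤ s*‖z - yb‖ + ρ := by
      calc ‖z - u‖ = ‖s•(z - yb) - (u - (z + s•(yb - z)))‖ := by rw [← hvec]
        _ ≤ ‖s•(z - yb)‖ + ‖u - (z + s•(yb - z))‖ := norm_sub_le _ _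
        _ ≤ s*‖z - yb‖ + ρ := by
            rw [norm_smul, Real.norm_eq_abs, abs_of_pos hs0]
            linarith
    -- F2
    have hF2e : -(r*(s*‖z - yb‖ + ρ)) ≤ zs z - zs u - (us z - us u) := by
      have hF2 := hzs u us hus
      have h2 : r*‖z - u‖ ≤ r*(s*‖z - yb‖ + ρ) := mul_le_mul_of_nonneg_left hzu hr
      have h3 : (zs - us) (z - u) = zs z - zs u - (us z - us u) := by
        simp only [ContinuousLinearMap.sub_apply, map_sub]
        ring
      rw [h3] at hF2
      linarith
    -- F1
    have hper : ∀ i, t i * ((zs - us) (z - y i) + (us - ys i) (z - u))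
        ≤ t i * ((zs - ys i) (z - y i)) := by
      intro i
      have hmono := hT.1 hus (hmem i)
      have hidi : (zs - ys i) (z - y i)
          = (zs - us) (z - y i) + (us - ys i) (z - u) + (us - ys i) (u - y i) := by
        simp only [ContinuousLinearMap.sub_apply, map_sub]
        ring
      exact mul_le_mul_of_nonneg_left (by linarith) (ht i)
    have hsumF1 : (∑ i, t i * ((zs - us) (z - y i) + (us - ys i) (z - u))) ≤ G := by
      rw [hGdef]
      exact Finset.sum_le_sum fun i _ => hper i
    have hsplit : (∑ i, t i * ((zs - us) (z - y i) + (us - ys i) (z - u)))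
        = ((zs z - us z) - (zs yb - us yb)) + (us (z - u) - ws (z - u)) := by
      have e1 : ∀ i : Fin n, t i * ((zs - us) (z - y i) + (us - ys i) (z - u))
          = (((zs z - us z) * t i - (zs (y i) - us (y i)) * t i) + us (z - u) * t i)
            - ys i (z - u) * t i := by
        intro i
        simp only [ContinuousLinearMap.sub_apply, map_sub]
        ring
      rw [Finset.sum_congr rfl fun i _ => e1 i]
      rw [Finset.sum_sub_distrib, Finset.sum_add_distrib, Finset.sum_sub_distrib]
      rw [hconst (zs z - us z), hconst (us (z - u))]
      have e2 : (∑ i : Fin n, (zs (y i) - us (y i)) * t i) = zs yb - us yb := by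
        have h := happ (zs - us)
        simp only [ContinuousLinearMap.sub_apply] at h
        rw [h]
        exact Finset.sum_congr rfl fun i _ => mul_comm _ _
      have e3 : (∑ i : Fin n, ys i (z - u) * t i) = ws (z - u) := by
        rw [hws (z - u)]
        exact Finset.sum_congr rfl fun i _ => mul_comm _ _
      rw [e2, e3]
      ring
    have hF1e : ((zs z - us z) - (zs yb - us yb)) + (us (z - u) - ws (z - u)) ≤ G := by
      rw [← hsplit]; exact hsumF1
    have hzu_us : us (z - u) = us z - us u := by simp [map_sub]
    have hzu_ws : ws (z - u) = ws z - ws u := by simp [map_sub]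
    rw [hzu_us, hzu_ws] at hF1e
    -- aggregated linear facts
    have hA1 : (zs z - zs yb) - (1-s)*(us z - us yb) - s*(ws z - ws yb) - κ - ‖ws‖*ρ ≤ G := by
      nlinarith [hF1e, hexp_us, hexp_ws, hu2, hEws_lb]
    have hA2 : s*(us z - us yb) ≤ s*(zs z - zs yb) + ‖zs‖*ρ + κ + r*(s*‖z - yb‖ + ρ) := by
      nlinarith [hF2e, hexp_zs, hexp_us, hEzs_lb, hu2]
    -- multiplied versions
    have hM1 : s*((zs z - zs yb) - (1-s)*(us z - us yb) - s*(ws z - ws yb) - κ - ‖ws‖*ρ)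
        ≤ s*G := mul_le_mul_of_nonneg_left hA1 hs0.le
    have hM2 : (1-s)*(s*(us z - us yb))
        ≤ (1-s)*(s*(zs z - zs yb) + ‖zs‖*ρ + κ + r*(s*‖z - yb‖ + ρ)) :=
      mul_le_mul_of_nonneg_left hA2 (by linarith)
    have hI1s : s*(s*((zs z - zs yb) - (ws z - ws yb))) = s*(s*(G - (Q - ws yb))) := by
      have h : (zs z - zs yb) - (ws z - ws yb) = G - (Q - ws yb) := by linarith [hGid]
      rw [h]
    have hn1 : s*(s*(Q - ws yb)) ≤ s*((μ - r) * ‖z - yb‖ / 8) :=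
      mul_le_mul_of_nonneg_left hsC hs0.le
    have hn3 : (1-s)*((‖zs‖ + r)*ρ) ≤ s*((μ - r)*‖z - yb‖)/16 := by
      have h1 : (1-s)*((‖zs‖ + r)*ρ) ≤ 1*((‖zs‖+r)*ρ) :=
        mul_le_mul_of_nonneg_right (by linarith)
          (mul_nonneg (by linarith [norm_nonneg zs]) hρ0.le)
      linarith
    have hn4 : s*(‖ws‖*ρ) ≤ s*((μ - r)*‖z - yb‖)/16 := by
      have h1 : s*(‖ws‖*ρ) ≤ 1*(‖ws‖*ρ) :=
        mul_le_mul_of_nonneg_right (by linarith) (mul_nonneg (norm_nonneg ws) hρ0.le)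
      linarith
    have hn5 : s*((μ - r)*‖z - yb‖/2) ≤ s*((1-s)*((μ - r)*‖z - yb‖)) := by
      apply mul_le_mul_of_nonneg_left _ hs0.le
      nlinarith [hβ]
    have hx0 : 0 ≤ s*((μ - r)*‖z - yb‖) := le_of_lt (mul_pos hs0 hβ)
    have hkey : 0 ≤ s*((1-s)*(G + μ*‖z - yb‖)) := by
      linarith [hM1, hM2, hI1s, hn1, hn3, hn4, hn5, hκle, hx0]
    have hpos : 0 < s*(1-s) := mul_pos hs0 (by linarith)
    by_contra hcon2
    push_neg at hcon2
    nlinarith [hkey, hpos, hcon2]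

lemma core (T : X → Set (StrongDual ℝ X)) (hT : IsMaxMonotoneOp T)
    (hdom : ∀ ε : ℝ, 0 < ε → {x : X | (Te T ε x).Nonempty} = {x : X | (T x).Nonempty})
    (z : X) (zs : StrongDual ℝ X) (r μ : ℝ) (hr : 0 ≤ r) (hμ : r < μ)
    (hzs : zs ∈ Te T r z) :
    ∃ us, us ∈ T z ∧ ‖us - zs‖ ≤ μ := by
  classical
  have hμ0 : 0 ≤ μ := le_trans hr hμ.le
  -- unnormalized star
  have hstar : ∀ (n : ℕ) (y : Fin n → X) (ys : Fin n → StrongDual ℝ X) (a : Fin n → ℝ),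
      (∀ i, ys i ∈ T (y i)) → (∀ i, 0 ≤ a i) →
      -(μ * ‖∑ i, a i • (z - y i)‖) ≤ ∑ i, a i * ((zs - ys i) (z - y i)) := by
    intro n y ys a hm ha
    rcases eq_or_lt_of_le (Finset.sum_nonneg (fun i _ => ha i) : (0:ℝ) ≤ ∑ i, a i)
      with hA | hA
    · have hz : ∀ i ∈ Finset.univ, a i = 0 :=
        (Finset.sum_eq_zero_iff_of_nonneg (fun i _ => ha i)).1 hA.symm
      have h1 : (∑ i, a i • (z - y i)) = 0 :=
        Finset.sum_eq_zero fun i hi => by rw [hz i hi, zero_smul]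
      have h2 : (∑ i, a i * ((zs - ys i) (z - y i))) = 0 :=
        Finset.sum_eq_zero fun i hi => by rw [hz i hi, zero_mul]
      rw [h1, h2, norm_zero, mul_zero, neg_zero]
    · have hAne : (∑ j, a j) ≠ 0 := ne_of_gt hA
      have key := star T hT hdom z zs r μ hr hμ hzs n y ys (fun i => a i / (∑ j, a j))
        hm (fun i => div_nonneg (ha i) (le_of_lt hA))
        (by rw [← Finset.sum_div]; exact div_self hAne)
      have h1 : (∑ i, a i • (z - y i))
          = (∑ j, a j) • (z - ∑ i, (a i / (∑ j, a j)) • y i) := by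
        rw [smul_sub, Finset.smul_sum]
        have e1 : ∀ i : Fin n, (∑ j, a j) • ((a i / (∑ j, a j)) • y i) = a i • y i := by
          intro i
          rw [smul_smul]
          congr 1
          field_simp
        rw [Finset.sum_congr rfl fun i _ => e1 i]
        rw [show (∑ i, a i • (z - y i)) = (∑ i, a i • z) - ∑ i, a i • y i from by
          rw [← Finset.sum_sub_distrib]
          exact Finset.sum_congr rfl fun i _ => smul_sub _ _ _]
        congr 1
        rw [← Finset.sum_smul]
      have h2 : ‖∑ i, a i • (z - y i)‖
          = (∑ j, a j) * ‖z - ∑ i, (a i / (∑ j, a j)) • y i‖ := by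
        rw [h1, norm_smul, Real.norm_eq_abs, abs_of_pos hA]
      have h3 : (∑ i, a i * ((zs - ys i) (z - y i)))
          = (∑ j, a j) * ∑ i, (a i / (∑ j, a j)) * ((zs - ys i) (z - y i)) := by
        rw [Finset.mul_sum]
        refine Finset.sum_congr rfl fun i _ => ?_
        rw [← mul_assoc]
        congr 1
        field_simp
      rw [h2, h3]
      have hmul := mul_le_mul_of_nonneg_left key (le_of_lt hA)
      nlinarith [hmul]
  -- the sublinear functional
  set SS : X → Set ℝ := fun v =>
    {w | ∃ (n : ℕ) (y : Fin n → X) (ys : Fin n → StrongDual ℝ X) (a : Fin n → ℝ),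
      (∀ i, ys i ∈ T (y i)) ∧ (∀ i, 0 ≤ a i) ∧
      w = μ * ‖v - ∑ i, a i • (z - y i)‖ + ∑ i, a i * ((zs - ys i) (z - y i))} with hSSdef
  have htriv : ∀ v, μ * ‖v‖ ∈ SS v := by
    intro v
    refine ⟨0, (fun i => i.elim0), (fun i => i.elim0), (fun i => i.elim0),
      (fun i => i.elim0), (fun i => i.elim0), by simp⟩
  have hne : ∀ v, (SS v).Nonempty := fun v => ⟨μ * ‖v‖, htriv v⟩
  have hlb : ∀ v, ∀ w ∈ SS v, -(μ * ‖v‖) ≤ w := by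
    rintro v w ⟨n, y, ys, a, hm, ha, rfl⟩
    have h1 := hstar n y ys a hm ha
    have h2 : ‖∑ i, a i • (z - y i)‖ ≤ ‖v - ∑ i, a i • (z - y i)‖ + ‖v‖ := by
      have h3 : ‖∑ i, a i • (z - y i)‖ = ‖(∑ i, a i • (z - y i)) - v + v‖ := by
        congr 1; abel
      rw [h3]
      calc ‖(∑ i, a i • (z - y i)) - v + v‖ ≤ ‖(∑ i, a i • (z - y i)) - v‖ + ‖v‖ :=
            norm_add_le _ _
        _ = ‖v - ∑ i, a i • (z - y i)‖ + ‖v‖ := by rw [norm_sub_rev]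
    nlinarith [mul_le_mul_of_nonneg_left h2 hμ0]
  have hbdd : ∀ v, BddBelow (SS v) := fun v => ⟨-(μ * ‖v‖), fun w hw => hlb v w hw⟩
  have hN_le : ∀ v, ∀ w ∈ SS v, sInf (SS v) ≤ w := fun v w hw => csInf_le (hbdd v) hw
  have hN_ge : ∀ v, -(μ * ‖v‖) ≤ sInf (SS v) := fun v => le_csInf (hne v) (hlb v)
  have hN_norm : ∀ v, sInf (SS v) ≤ μ * ‖v‖ := fun v => hN_le v _ (htriv v)
  have hsingle : ∀ y0 ys0, ys0 ∈ T y0 → sInf (SS (z - y0)) ≤ (zs - ys0) (z - y0) := by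
    intro y0 ys0 h0
    apply hN_le
    refine ⟨1, (fun _ => y0), (fun _ => ys0), (fun _ => 1),
      (fun _ => h0), (fun _ => zero_le_one), ?_⟩
    simp
  -- scaling
  have hscale_le : ∀ (k : ℝ), 0 < k → ∀ v, sInf (SS (k • v)) ≤ k * sInf (SS v) := by
    intro k hk v
    have step : ∀ w ∈ SS v, sInf (SS (k • v)) ≤ k * w := by
      rintro w ⟨n, y, ys, a, hm, ha, rfl⟩
      refine le_trans (hN_le (k • v) _ ⟨n, y, ys, (fun i => k * a i), hm,
        (fun i => mul_nonneg hk.le (ha i)), rfl⟩) (le_of_eq ?_)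
      have h1 : (∑ i, (k * a i) • (z - y i)) = k • ∑ i, a i • (z - y i) := by
        rw [Finset.smul_sum]
        exact Finset.sum_congr rfl fun i _ => by rw [smul_smul]
      have h2 : ‖k • v - ∑ i, (k * a i) • (z - y i)‖ = k * ‖v - ∑ i, a i • (z - y i)‖ := by
        rw [h1, ← smul_sub, norm_smul, Real.norm_eq_abs, abs_of_pos hk]
      have h3 : (∑ i, (k * a i) * ((zs - ys i) (z - y i)))
          = k * ∑ i, a i * ((zs - ys i) (z - y i)) := by
        rw [Finset.mul_sum]
        exact Finset.sum_congr rfl fun i _ => by ring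
      rw [h2, h3]
      ring
    have h4 : sInf (SS (k • v)) / k ≤ sInf (SS v) := by
      apply le_csInf (hne v)
      intro w hw
      rw [div_le_iff₀ hk]
      exact le_trans (step w hw) (le_of_eq (mul_comm _ _))
    calc sInf (SS (k • v)) = (sInf (SS (k • v)) / k) * k := by field_simp
      _ ≤ sInf (SS v) * k := mul_le_mul_of_nonneg_right h4 hk.le
      _ = k * sInf (SS v) := mul_comm _ _
  have hscale : ∀ (k : ℝ), 0 < k → ∀ v, sInf (SS (k • v)) = k * sInf (SS v) := by
    intro k hk v
    refine le_antisymm (hscale_le k hk v) ?_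
    have h1 := hscale_le k⁻¹ (inv_pos.2 hk) (k • v)
    rw [inv_smul_smul₀ (ne_of_gt hk)] at h1
    have h2 := mul_le_mul_of_nonneg_left h1 hk.le
    calc k * sInf (SS v) ≤ k * (k⁻¹ * sInf (SS (k • v))) := h2
      _ = sInf (SS (k • v)) := by field_simp
  -- subadditivity
  have hadd : ∀ v₁ v₂, sInf (SS (v₁ + v₂)) ≤ sInf (SS v₁) + sInf (SS v₂) := by
    intro v₁ v₂
    have key : ∀ w₁ ∈ SS v₁, ∀ w₂ ∈ SS v₂, sInf (SS (v₁ + v₂)) ≤ w₁ + w₂ := by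
      rintro w₁ ⟨n₁, y₁, ys₁, a₁, hm₁, ha₁, rfl⟩ w₂ ⟨n₂, y₂, ys₂, a₂, hm₂, ha₂, rfl⟩
      have hmem : (μ * ‖(v₁ + v₂) - ∑ i : Fin (n₁ + n₂),
            (Fin.append a₁ a₂ i) • (z - Fin.append y₁ y₂ i)‖
          + ∑ i : Fin (n₁ + n₂), (Fin.append a₁ a₂ i) *
            ((zs - Fin.append ys₁ ys₂ i) (z - Fin.append y₁ y₂ i))) ∈ SS (v₁ + v₂) := by
        refine ⟨n₁ + n₂, Fin.append y₁ y₂, Fin.append ys₁ ys₂, Fin.append a₁ a₂,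
          ?_, ?_, rfl⟩
        · intro i
          refine Fin.addCases (fun j => ?_) (fun j => ?_) i
          · simp only [Fin.append_left]; exact hm₁ j
          · simp only [Fin.append_right]; exact hm₂ j
        · intro i
          refine Fin.addCases (fun j => ?_) (fun j => ?_) i
          · simp only [Fin.append_left]; exact ha₁ j
          · simp only [Fin.append_right]; exact ha₂ j
      refine le_trans (hN_le _ _ hmem) ?_
      have hsv : (∑ i : Fin (n₁ + n₂), (Fin.append a₁ a₂ i) • (z - Fin.append y₁ y₂ i))
          = (∑ i, a₁ i • (z - y₁ i)) + ∑ i, a₂ i • (z - y₂ i) := by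
        rw [Fin.sum_univ_add]
        congr 1
        · exact Finset.sum_congr rfl fun i _ => by simp
        · exact Finset.sum_congr rfl fun i _ => by simp
      have hsc : (∑ i : Fin (n₁ + n₂), (Fin.append a₁ a₂ i) *
            ((zs - Fin.append ys₁ ys₂ i) (z - Fin.append y₁ y₂ i)))
          = (∑ i, a₁ i * ((zs - ys₁ i) (z - y₁ i)))
            + ∑ i, a₂ i * ((zs - ys₂ i) (z - y₂ i)) := by
        rw [Fin.sum_univ_add]
        congr 1
        · exact Finset.sum_congr rfl fun i _ => by simp
        · exact Finset.sum_congr rfl fun i _ => by simp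
      rw [hsv, hsc]
      have htri : ‖(v₁ + v₂) - ((∑ i, a₁ i • (z - y₁ i)) + ∑ i, a₂ i • (z - y₂ i))‖
          ≤ ‖v₁ - ∑ i, a₁ i • (z - y₁ i)‖ + ‖v₂ - ∑ i, a₂ i • (z - y₂ i)‖ := by
        have : (v₁ + v₂) - ((∑ i, a₁ i • (z - y₁ i)) + ∑ i, a₂ i • (z - y₂ i))
            = (v₁ - ∑ i, a₁ i • (z - y₁ i)) + (v₂ - ∑ i, a₂ i • (z - y₂ i)) := by abel
        rw [this]
        exact norm_add_le _ _
      nlinarith [mul_le_mul_of_nonneg_left htri hμ0]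
    have h₁ : ∀ w₁ ∈ SS v₁, sInf (SS (v₁ + v₂)) - w₁ ≤ sInf (SS v₂) := fun w₁ h =>
      le_csInf (hne v₂) fun w₂ h₂ => by linarith [key w₁ h w₂ h₂]
    have h₂ : sInf (SS (v₁ + v₂)) - sInf (SS v₂) ≤ sInf (SS v₁) :=
      le_csInf (hne v₁) fun w₁ h => by linarith [h₁ w₁ h]
    linarith
  -- Hahn-Banach
  obtain ⟨g, -, hg⟩ := exists_extension_of_le_sublinear
    (LinearMap.toPMap (0 : X →ₗ[ℝ] ℝ) ⊥) (fun v => sInf (SS v)) hscale hadd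
    (by
      rintro ⟨x, hx⟩
      have hx0 : x = 0 := by simpa using hx
      subst hx0
      have := hN_ge 0
      simpa using this)
  have hgb : ∀ v, ‖g v‖ ≤ μ * ‖v‖ := by
    intro v
    rw [Real.norm_eq_abs, abs_le]
    constructor
    · have h1 := le_trans (hg (-v)) (hN_norm (-v))
      rw [map_neg, norm_neg] at h1
      linarith
    · exact le_trans (hg v) (hN_norm v)
  set Gc : StrongDual ℝ X := LinearMap.mkContinuous g μ hgb with hGcdef
  have hGcapp : ∀ v, Gc v = g v := fun v => rfl
  refine ⟨zs - Gc, ?_, ?_⟩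
  · apply hT.2
    intro y0 ys0 h0
    have h1 : g (z - y0) ≤ (zs - ys0) (z - y0) := le_trans (hg (z - y0)) (hsingle y0 ys0 h0)
    have h2 : (zs - Gc - ys0) (z - y0) = (zs - ys0) (z - y0) - g (z - y0) := by
      simp only [ContinuousLinearMap.sub_apply]
      rw [hGcapp]
      ring
    rw [h2]
    linarith
  · have h3 : zs - Gc - zs = -Gc := by abel
    rw [h3, norm_neg]
    exact LinearMap.mkContinuous_norm_le g hμ0 hgb


theorem stmt15 (T : X → Set (StrongDual ℝ X)) (hT : IsMaxMonotoneOp T)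
    (hdom : ∀ ε : ℝ, 0 < ε → {x : X | (Te T ε x).Nonempty} = {x : X | (T x).Nonempty}) :
    IsRegularOp T := by
  intro x xs
  have hLd : Lnum T x xs ≤ dnum T x xs := by
    refine le_iInf fun us => le_iInf fun hus => ?_
    refine iSup_le fun y => iSup_le fun ys => iSup_le fun hys => iSup_le fun hne => ?_
    apply ENNReal.ofReal_le_ofReal
    have h3 : (0:ℝ) < ‖x - y‖ := by
      rw [norm_pos_iff, sub_ne_zero]
      exact fun h => hne h.symm
    rw [div_le_iff₀ h3]
    have hm := hT.1 hus hys
    have h4 : (xs - ys) (y - x) = (xs - us) (y - x) + (us - ys) (y - x) := by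
      simp only [ContinuousLinearMap.sub_apply]
      ring
    have h5 : (us - ys) (y - x) = -((us - ys) (x - y)) := by rw [← map_neg, neg_sub]
    have h6 : (xs - us) (y - x) ≤ ‖xs - us‖ * ‖y - x‖ := dual_ub _ _
    have h7 : ‖xs - us‖ = ‖us - xs‖ := norm_sub_rev _ _
    have h8 : ‖y - x‖ = ‖x - y‖ := norm_sub_rev _ _
    rw [h7, h8] at h6
    linarith
  by_cases hL : Lnum T x xs = ⊤
  · rw [hL]
    exact (top_le_iff.1 (hL ▸ hLd)).symm
  · have hr0 : (0:ℝ) ≤ (Lnum T x xs).toReal := ENNReal.toReal_nonneg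
    have hLr : Lnum T x xs = ENNReal.ofReal (Lnum T x xs).toReal :=
      (ENNReal.ofReal_toReal hL).symm
    have hTe : xs ∈ Te T (Lnum T x xs).toReal x := by
      intro y ys hys
      by_cases hxy : y = x
      · subst hxy
        simp
      · have h1 : ENNReal.ofReal ((xs - ys) (y - x) / ‖x - y‖) ≤ Lnum T x xs := by
          apply le_iSup_of_le y
          apply le_iSup_of_le ys
          apply le_iSup_of_le hys
          exact le_iSup_of_le hxy le_rfl
        rw [hLr] at h1
        have h2 : (xs - ys) (y - x) / ‖x - y‖ ≤ (Lnum T x xs).toReal :=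
          (ENNReal.ofReal_le_ofReal_iff hr0).1 h1
        have h3 : (0:ℝ) < ‖x - y‖ := by
          rw [norm_pos_iff, sub_ne_zero]
          exact fun h => hxy h.symm
        rw [div_le_iff₀ h3] at h2
        have h4 : (xs - ys) (x - y) = -((xs - ys) (y - x)) := by rw [← map_neg, neg_sub]
        rw [h4]
        linarith
    have hdL : dnum T x xs ≤ Lnum T x xs := by
      rw [hLr]
      apply ENNReal.le_of_forall_pos_le_add
      intro ε hε _
      have hεR : (0:ℝ) < (ε:ℝ) := by exact_mod_cast hε
      obtain ⟨us, hus, hle⟩ := core T hT hdom x xs (Lnum T x xs).toReal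
        ((Lnum T x xs).toReal + (ε:ℝ)) hr0 (by linarith) hTe
      have h1 : dnum T x xs ≤ ENNReal.ofReal ‖us - xs‖ := by
        apply iInf_le_of_le us
        exact iInf_le_of_le hus le_rfl
      have h2 : ENNReal.ofReal ‖us - xs‖
          ≤ ENNReal.ofReal ((Lnum T x xs).toReal + (ε:ℝ)) := ENNReal.ofReal_le_ofReal hle
      have h3 : ENNReal.ofReal ((Lnum T x xs).toReal + (ε:ℝ))
          = ENNReal.ofReal (Lnum T x xs).toReal + ENNReal.ofReal (ε:ℝ) :=
        ENNReal.ofReal_add hr0 hεR.le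
      rw [ENNReal.ofReal_coe_nnreal] at h3
      calc dnum T x xs ≤ ENNReal.ofReal ‖us - xs‖ := h1
        _ ≤ ENNReal.ofReal ((Lnum T x xs).toReal + (ε:ℝ)) := h2
        _ = ENNReal.ofReal (Lnum T x xs).toReal + ε := h3
    exact le_antisymm hLd hdL
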